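/- If a group G acts properly by automorphisms on a space with walls (X, W) such that the wall pseudo-metric is proper (i.e. for some basepoint x, the number of walls separating x from g·x tends to infinity as g leaves finite subsets), then G has the Haagerup property. -/

import Mathlib

open Set

/-- The Haagerup property: the group admits a proper affine isometric action on a
real Hilbert space. -/
def HasHaagerupProperty (G : Type*) [Group G] : Prop :=
  ∃ (H : Type) (_ : NormedAddCommGroup H) (_ : InnerProductSpace ℝ H) (_ : CompleteSpace H)
    (α : G → H → H),
    (∀ g, Isometry (α g)) ∧
    (∀ g h x, α (g * h) x = α g (α h x)) ∧
    (∀ x, α 1 x = x) ∧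
    (∀ M : ℝ, {g : G | dist (α g 0) 0 ≤ M}.Finite)

/-- If a countable group acts by automorphisms on a space with walls so that the wall
pseudo-metric is proper, then it has the Haagerup property.  Walls are encoded by a type
`Wl` together with a two-sided labelling `side : Wl → X → Bool`; a wall `w` separates `x`
and `y` iff `side w x ≠ side w y`. -/
theorem haagerup_of_proper_action_on_space_with_walls
    {G : Type} [Group G] [Countable G] {X Wl : Type} (side : Wl → X → Bool)
    (hne : ∀ w : Wl, (∃ x, side w x = true) ∧ (∃ x, side w x = false))
    (hfin : ∀ x y : X, {w : Wl | side w x ≠ side w y}.Finite)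
    (ρ : G →* Equiv.Perm X) (π : G →* Equiv.Perm Wl)
    (hcompat : ∀ (g : G) (w : Wl) (x : X), side (π g w) (ρ g x) = side w x)
    (x₀ : X)
    (hproper : ∀ n : ℕ, {g : G | {w : Wl | side w x₀ ≠ side w (ρ g x₀)}.ncard ≤ n}.Finite) :
    HasHaagerupProperty G := by
  classical
  -- the Hilbert space ℓ²(Wl)
  set H : Type := ↥(lp (fun _ : Wl => ℝ) 2) with hH
  have hptoReal : (0:ℝ) < (2 : ENNReal).toReal := by norm_num
  have htwo : (2 : ENNReal).toReal = 2 := by norm_num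
  -- characteristic functions
  set χ : X → Wl → ℝ := fun x w => if side w x then 1 else 0 with hχ
  -- the cocycle as a bare function
  set b : G → Wl → ℝ := fun g w => χ (ρ g x₀) w - χ x₀ w with hb
  -- support of b g
  have hbsupp : ∀ g w, b g w ≠ 0 → side w x₀ ≠ side w (ρ g x₀) := by
    intro g w h hside
    apply h
    simp only [hb, hχ, hside, sub_self]
  -- b g is ℓ²
  have hbmem : ∀ g, Memℓp (b g) 2 := by
    intro g
    apply memℓp_gen
    apply summable_of_ne_finset_zero (s := (hfin x₀ (ρ g x₀)).toFinset)
    intro w hw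
    have : ¬ side w x₀ ≠ side w (ρ g x₀) := by
      simpa using fun h => hw ((hfin x₀ (ρ g x₀)).mem_toFinset.mpr h)
    have hbz : b g w = 0 := by
      by_contra h; exact this (hbsupp g w h)
    simp [hbz, hptoReal.ne']
  -- composing an ℓ² function with a permutation stays ℓ²
  have hcomp : ∀ (e : Equiv.Perm Wl) (f : H), Memℓp (fun w => (f : ∀ _ : Wl, ℝ) (e w)) 2 := by
    intro e f
    apply memℓp_gen
    have := ((memℓp_gen_iff hptoReal).mp (lp.memℓp f))
    exact (e.summable_iff (f := fun w => ‖(f : ∀ _ : Wl, ℝ) w‖ ^ (2:ENNReal).toReal)).mpr this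
  -- the affine action
  set α : G → H → H := fun g f =>
    ⟨fun w => (f : ∀ _ : Wl, ℝ) ((π g)⁻¹ w) + b g w, ((hcomp ((π g)⁻¹) f).add (hbmem g))⟩
    with hα
  have hαapp : ∀ (g : G) (f : H) (w : Wl),
      (α g f : ∀ _ : Wl, ℝ) w = (f : ∀ _ : Wl, ℝ) ((π g)⁻¹ w) + b g w := fun _ _ _ => rfl
  refine ⟨H, inferInstance, inferInstance, inferInstance, α, ?_, ?_, ?_, ?_⟩
  · -- isometry
    intro g
    intro f₁ f₂
    rw [edist_dist, edist_dist]
    congr 1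
    rw [dist_eq_norm, dist_eq_norm]
    have hsub : ∀ w, ((α g f₁ - α g f₂ : H) : ∀ _ : Wl, ℝ) w
        = ((f₁ - f₂ : H) : ∀ _ : Wl, ℝ) ((π g)⁻¹ w) := by
      intro w
      rw [lp.coeFn_sub, Pi.sub_apply, hαapp, hαapp, lp.coeFn_sub, Pi.sub_apply]
      ring
    rw [lp.norm_eq_tsum_rpow hptoReal, lp.norm_eq_tsum_rpow hptoReal]
    congr 1
    rw [← ((π g)⁻¹ : Equiv.Perm Wl).tsum_eq
      (f := fun w => ‖((f₁ - f₂ : H) : ∀ _ : Wl, ℝ) w‖ ^ (2:ENNReal).toReal)]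
    exact tsum_congr fun w => by rw [hsub w]
  · -- cocycle / action identity
    intro g h f
    apply lp.ext
    funext w
    have e1 : ((π (g*h))⁻¹ : Equiv.Perm Wl) w = (π h)⁻¹ ((π g)⁻¹ w) := by
      simp [map_mul, Equiv.Perm.mul_apply]
    have key : ∀ y : X, χ y ((π g)⁻¹ w) = χ (ρ g y) w := by
      intro y
      have := hcompat g ((π g)⁻¹ w) y
      simp only [Equiv.Perm.inv_def, Equiv.apply_symm_apply] at this
      simp only [hχ, Equiv.Perm.inv_def, this]
    have e2 : b (g*h) w = b h ((π g)⁻¹ w) + b g w := by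
      simp only [hb]
      rw [key (ρ h x₀), key x₀]
      have : ρ g (ρ h x₀) = ρ (g * h) x₀ := by simp [map_mul, Equiv.Perm.mul_apply]
      rw [this]; ring
    show (α (g*h) f : ∀ _ : Wl, ℝ) w = (α g (α h f) : ∀ _ : Wl, ℝ) w
    rw [hαapp, hαapp, hαapp, e1, e2]
    ring
  · -- identity acts trivially
    intro f
    apply lp.ext
    funext w
    show (α 1 f : ∀ _ : Wl, ℝ) w = (f : ∀ _ : Wl, ℝ) w
    rw [hαapp]
    have hb1 : b 1 w = 0 := by simp [hb]
    simp [hb1, Equiv.Perm.one_symm]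
  · -- properness
    intro M
    set N : G → ℕ := fun g => {w : Wl | side w x₀ ≠ side w (ρ g x₀)}.ncard with hN
    -- norm of the cocycle
    have hnorm : ∀ g : G, ‖α g 0‖ ^ 2 = (N g : ℝ) := by
      intro g
      have hα0 : ∀ w, ((α g 0 : H) : ∀ _ : Wl, ℝ) w = b g w := by
        intro w; rw [hαapp]; simp
      have hsum := lp.hasSum_norm hptoReal (α g 0)
      rw [htwo] at hsum
      have hS := hfin x₀ (ρ g x₀)
      have hval : ∀ w, ‖((α g 0 : H) : ∀ _ : Wl, ℝ) w‖ ^ (2:ℝ)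
          = if side w x₀ ≠ side w (ρ g x₀) then 1 else 0 := by
        intro w
        rw [hα0]
        by_cases hc : side w x₀ ≠ side w (ρ g x₀)
        · have : b g w = 1 ∨ b g w = -1 := by
            simp only [hb, hχ]
            cases hx : side w x₀ <;> cases hy : side w (ρ g x₀) <;>
              simp_all
          rcases this with h1 | h1 <;> simp [h1, hc]
        · have : b g w = 0 := by
            by_contra h; exact hc (hbsupp g w h)
          simp [this, hc]
        ;
      have hsum2 : HasSum (fun w => ‖((α g 0 : H) : ∀ _ : Wl, ℝ) w‖ ^ (2:ℝ)) (N g : ℝ) := by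
        have : HasSum (fun w => ‖((α g 0 : H) : ∀ _ : Wl, ℝ) w‖ ^ (2:ℝ))
            (∑ w ∈ hS.toFinset, ‖((α g 0 : H) : ∀ _ : Wl, ℝ) w‖ ^ (2:ℝ)) := by
          apply hasSum_sum_of_ne_finset_zero
          intro w hw
          rw [hval]
          have : ¬ side w x₀ ≠ side w (ρ g x₀) := fun h => hw (hS.mem_toFinset.mpr h)
          simp [this]
        convert this using 1
        have hterm : ∀ w ∈ hS.toFinset, ‖((α g 0 : H) : ∀ _ : Wl, ℝ) w‖ ^ (2:ℝ) = 1 := by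
          intro w hw
          have hww : side w x₀ ≠ side w (ρ g x₀) := hS.mem_toFinset.mp hw
          rw [hval, if_pos hww]
        rw [Finset.sum_congr rfl hterm, Finset.sum_const, nsmul_eq_mul, mul_one, hN]
        simp [Set.ncard_eq_toFinset_card _ hS]
      have := hsum.unique hsum2
      rw [← this]
      norm_num
    have hceil : {g : G | dist (α g 0) 0 ≤ M} ⊆ {g : G | N g ≤ ⌈M^2⌉₊} := by
      intro g hg
      simp only [mem_setOf_eq, dist_zero_right] at hg
      have hM0 : (0:ℝ) ≤ M := le_trans (norm_nonneg _) hg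
      have h1 : (N g : ℝ) ≤ M ^ 2 := by
        rw [← hnorm g]
        exact pow_le_pow_left₀ (norm_nonneg _) hg 2
      have h2 : (N g : ℝ) ≤ (⌈M^2⌉₊ : ℝ) := h1.trans (Nat.le_ceil _)
      exact_mod_cast h2
    exact (hproper ⌈M^2⌉₊).subset hceil
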